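/- For n a positive integer, let m₀(k) := (2k+n)·(k+1)·(k+2)⋯(n+k-1)/n! denote the dimension of the space of spherical harmonics of degree k on the n-sphere. Then for every t > 0, the series (1/2)·∑_{k=0}^{∞} m₀(k)·e^{-(k + n/2)t} converges and equals cosh(t/2) / (2·sinh(t/2))^{n+1}. -/

import Mathlib

open Real Finset

lemma ascFactorial_prod (k : ℕ) : ∀ m : ℕ, ((k+1).ascFactorial m : ℝ) = ∏ i ∈ Finset.range m, ((k : ℝ) + 1 + i)
  | 0 => by simp
  | m + 1 => by
      rw [Nat.ascFactorial_succ, Finset.prod_range_succ, ← ascFactorial_prod k m]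
      push_cast; ring

lemma key_nat (k m : ℕ) :
    (2*k + (m+1)) * (k+1).ascFactorial m
      = (m+1).factorial * ((k+(m+1)).choose (m+1) + (k+m).choose (m+1)) := by
  have h1 : (k+1).ascFactorial (m+1) = (m+1).factorial * (k+(m+1)).choose (m+1) := by
    rw [Nat.ascFactorial_eq_factorial_mul_choose]
  have h2 : k.ascFactorial (m+1) = (m+1).factorial * (k+m).choose (m+1) := by
    rw [Nat.ascFactorial_eq_factorial_mul_choose']
    congr 3
  have h3 : k.ascFactorial (m+1) = k * (k+1).ascFactorial m := by
    rw [Nat.ascFactorial_succ, ← Nat.succ_ascFactorial]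
  have h4 : (k+1).ascFactorial (m+1) = (k+1+m) * (k+1).ascFactorial m := Nat.ascFactorial_succ
  rw [Nat.mul_add, ← h1, ← h2, h3, h4]
  ring

/-- The free wave trace on H^{n+1} in even dimensions: with
m₀(k) = (2k+n)(k+1)⋯(n+k-1)/n!, for all t > 0 we have
(1/2)∑ₖ m₀(k) e^{-(k+n/2)t} = cosh(t/2)/(2 sinh(t/2))^{n+1}. -/
theorem free_wave_trace_sum (n : ℕ) (hn : 1 ≤ n) (t : ℝ) (ht : 0 < t) :
    HasSum
      (fun k : ℕ =>
        (1/2 : ℝ) *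
          ((2 * (k : ℝ) + n) * (∏ i ∈ Finset.range (n-1), ((k : ℝ) + 1 + i)) / (Nat.factorial n : ℝ)) *
          Real.exp (-((k : ℝ) + n/2) * t))
      (Real.cosh (t/2) / (2 * Real.sinh (t/2))^(n+1)) := by
  obtain ⟨m, rfl⟩ : ∃ m, n = m + 1 := ⟨n - 1, by omega⟩
  set x : ℝ := Real.exp (-t) with hxdef
  have hx0 : 0 < x := Real.exp_pos _
  have hx1 : x < 1 := Real.exp_lt_one_iff.mpr (by linarith)
  have hxn : ‖x‖ < 1 := by rw [Real.norm_eq_abs, abs_of_pos hx0]; exact hx1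
  have h1 : HasSum (fun k : ℕ => ((k + (m+1)).choose (m+1) : ℝ) * x ^ k)
      (1 / (1 - x) ^ (m + 2)) := by
    simpa using hasSum_choose_mul_geometric_of_norm_lt_one (m+1) hxn
  have h2 : HasSum (fun k : ℕ => ((k + m).choose (m+1) : ℝ) * x ^ k)
      (x * (1 / (1 - x) ^ (m + 2))) := by
    have hs : HasSum (fun k : ℕ => ((k + 1 + m).choose (m+1) : ℝ) * x ^ (k+1))
        (x * (1 / (1 - x) ^ (m + 2))) := by
      convert h1.mul_left x using 2 with k
      · rfl
      rw [show k+1+m = k+(m+1) by omega, pow_succ]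
      ring
    have := (hasSum_nat_add_iff (f := fun k : ℕ => ((k + m).choose (m+1) : ℝ) * x ^ k) 1).mp hs
    simpa [Nat.choose_eq_zero_of_lt (show m < m + 1 by omega)] using this
  have h3 := (h1.add h2).mul_left ((1/2 : ℝ) * Real.exp (-(((m:ℝ)+1)/2) * t))
  convert h3 using 1
  · rfl
  · funext k
    have hkey : ((2*(k:ℝ) + ((m:ℝ)+1)) * ((k+1).ascFactorial m : ℝ))
        = (((m+1).factorial : ℝ)) * (((k+(m+1)).choose (m+1) : ℝ) + ((k+m).choose (m+1) : ℝ)) := by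
      have := congrArg (Nat.cast : ℕ → ℝ) (key_nat k m)
      push_cast at this
      linarith [this]
    have hprod : (∏ i ∈ Finset.range (m+1-1), ((k : ℝ) + 1 + i)) = ((k+1).ascFactorial m : ℝ) := by
      rw [ascFactorial_prod]; norm_num
    have hfac : (((m+1).factorial : ℕ) : ℝ) ≠ 0 := by positivity
    have hexp : Real.exp (-((k : ℝ) + ((m:ℝ)+1)/2) * t)
        = Real.exp (-(((m:ℝ)+1)/2) * t) * x ^ k := by
      rw [hxdef, ← Real.exp_nat_mul, ← Real.exp_add]
      congr 1
      ring
    simp only [hprod]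
    push_cast
    rw [hexp, hkey, mul_div_cancel_left₀ _ hfac]
    ring
  · have hpow : Real.exp (t/2) ^ (m+2) = Real.exp (((m:ℝ)+2) * (t/2)) := by
      rw [← Real.exp_nat_mul]; congr 1; push_cast; ring
    have key : Real.exp (-(((m:ℝ)+1)/2) * t) * (1 + x) * Real.exp (t/2) ^ (m+2)
        = Real.exp (t/2) + Real.exp (-(t/2)) := by
      rw [hpow, hxdef]
      rw [show Real.exp (-(((m:ℝ)+1)/2) * t) * (1 + Real.exp (-t)) * Real.exp (((m:ℝ)+2) * (t/2))
          = Real.exp (-(((m:ℝ)+1)/2) * t) * Real.exp (((m:ℝ)+2) * (t/2))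
            + Real.exp (-(((m:ℝ)+1)/2) * t) * Real.exp (-t) * Real.exp (((m:ℝ)+2) * (t/2)) by ring]
      rw [← Real.exp_add, ← Real.exp_add, ← Real.exp_add]
      congr 1 <;> · congr 1; ring
    have hsinh : 2 * Real.sinh (t/2) = Real.exp (t/2) * (1 - x) := by
      have hA : Real.exp (t/2) * Real.exp (-t) = Real.exp (-(t/2)) := by
        rw [← Real.exp_add]; congr 1; ring
      rw [Real.sinh_eq, hxdef, mul_sub, mul_one, hA]; ring
    have h1x : (1 : ℝ) - x ≠ 0 := ne_of_gt (by linarith)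
    have hE : Real.exp (t/2) ≠ 0 := Real.exp_ne_zero _
    rw [Real.cosh_eq, hsinh, mul_pow, ← key]
    field_simp
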